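/- The positional marked patterns 1\underline{2}3 and 1\underline{3}2 are pmp-Wilf equivalent: for all n, the number of σ ∈ S_n with exactly m positions j that serve as the middle value in an occurrence of 123 (i.e., exist i < j < k with σ_i < σ_j < σ_k) equals the number of σ ∈ S_n with exactly m positions j serving as the largest value in an occurrence of 132 at the middle position (i.e., exist i < j < k with σ_i < σ_k < σ_j). -/
import Mathlib

open Equiv Finset

section Aux

variable {n : ℕ}

/-- Parameterized version of the 123-statistic, with a virtual threshold `s`:
positions `j` such that (`σ j ≥ s` or some earlier entry is smaller) and some
later entry is larger. -/
def PM123 (s : ℕ) (σ : Equiv.Perm (Fin n)) : ℕ :=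
  (Finset.univ.filter fun j : Fin n =>
    (s ≤ (σ j : ℕ) ∨ ∃ i, i < j ∧ σ i < σ j) ∧ ∃ k, j < k ∧ σ j < σ k).card

/-- Parameterized version of the 132-statistic. -/
def PM132 (s : ℕ) (σ : Equiv.Perm (Fin n)) : ℕ :=
  (Finset.univ.filter fun j : Fin n =>
    ∃ k, j < k ∧ σ k < σ j ∧ (s ≤ (σ k : ℕ) ∨ ∃ i, i < j ∧ σ i < σ k)).card

lemma succAbove_val (a : Fin (n + 1)) (v : Fin n) :
    ((a.succAbove v : Fin (n + 1)) : ℕ) = if (v : ℕ) < (a : ℕ) then (v : ℕ) else (v : ℕ) + 1 := by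
  by_cases h : (v : ℕ) < (a : ℕ)
  · rw [Fin.succAbove, if_pos (by simpa [Fin.lt_def] using h), if_pos h]; simp
  · rw [Fin.succAbove, if_neg (by simpa [Fin.lt_def] using h), if_neg h]; simp

lemma L1 (s : ℕ) (a : Fin (n + 1)) (v : Fin n) :
    (s ≤ ((a.succAbove v : Fin (n + 1)) : ℕ) ∨ a < a.succAbove v) ↔ min s (a : ℕ) ≤ (v : ℕ) := by
  rw [Fin.lt_def, succAbove_val]
  split_ifs <;> omega

lemma L4 (a : Fin (n + 1)) (v : Fin n) : a < a.succAbove v ↔ (a : ℕ) ≤ (v : ℕ) := by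
  rw [Fin.lt_def, succAbove_val]
  split_ifs <;> omega

lemma L5 (a : Fin (n + 1)) (v : Fin n) : a.succAbove v < a ↔ (v : ℕ) < (a : ℕ) := by
  rw [Fin.lt_def, succAbove_val]
  split_ifs <;> omega

/-- Insertion of a first value `a` in front of a (suitably relabelled) permutation `τ`. -/
def mkp (a : Fin (n + 1)) (τ : Equiv.Perm (Fin n)) : Equiv.Perm (Fin (n + 1)) :=
  ((finSuccEquiv n).trans τ.optionCongr).trans (finSuccEquiv' a).symm

@[simp] lemma mkp_zero (a : Fin (n + 1)) (τ : Equiv.Perm (Fin n)) : mkp a τ 0 = a := by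
  simp [mkp]

@[simp] lemma mkp_succ (a : Fin (n + 1)) (τ : Equiv.Perm (Fin n)) (i : Fin n) :
    mkp a τ i.succ = a.succAbove (τ i) := by
  simp [mkp]

lemma mkp_bijective :
    Function.Bijective (fun p : Fin (n + 1) × Equiv.Perm (Fin n) => mkp p.1 p.2) := by
  rw [Fintype.bijective_iff_injective_and_card]
  constructor
  · rintro ⟨a, τ⟩ ⟨b, ρ⟩ h
    simp only at h
    have h0 : a = b := by rw [← mkp_zero a τ, ← mkp_zero b ρ, h]
    subst h0
    refine Prod.ext rfl (Equiv.ext fun i => ?_)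
    have : mkp a τ i.succ = mkp a ρ i.succ := by rw [h]
    rw [mkp_succ, mkp_succ] at this
    exact Fin.succAbove_right_injective this
  · simp [Fintype.card_perm, Nat.factorial_succ]

lemma nat_card_sigma {ι : Type*} [Fintype ι] (G : ι → Type*) [∀ i, Finite (G i)] :
    Nat.card ((i : ι) × G i) = ∑ i, Nat.card (G i) := by
  letI : ∀ i, Fintype (G i) := fun i => Fintype.ofFinite (G i)
  simp [Nat.card_eq_fintype_card]

lemma card_split (P : Equiv.Perm (Fin (n + 1)) → Prop) :
    Nat.card {σ : Equiv.Perm (Fin (n + 1)) // P σ} =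
      ∑ a : Fin (n + 1), Nat.card {τ : Equiv.Perm (Fin n) // P (mkp a τ)} := by
  let E : (Fin (n + 1) × Equiv.Perm (Fin n)) ≃ Equiv.Perm (Fin (n + 1)) :=
    Equiv.ofBijective _ mkp_bijective
  have e1 : {p : Fin (n + 1) × Equiv.Perm (Fin n) // P (mkp p.1 p.2)} ≃
      {σ : Equiv.Perm (Fin (n + 1)) // P σ} := Equiv.subtypeEquiv E fun p => Iff.rfl
  rw [Nat.card_congr e1.symm,
    Nat.card_congr (Equiv.subtypeProdEquivSigmaSubtype fun (a : Fin (n + 1))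
      (τ : Equiv.Perm (Fin n)) => P (mkp a τ))]
  exact nat_card_sigma _

lemma cond0_123 (s : ℕ) (a : Fin (n + 1)) (τ : Equiv.Perm (Fin n)) :
    ((s ≤ ((mkp a τ) 0 : ℕ) ∨ ∃ i, i < (0 : Fin (n + 1)) ∧ mkp a τ i < mkp a τ 0) ∧
        ∃ k, (0 : Fin (n + 1)) < k ∧ mkp a τ 0 < mkp a τ k) ↔
      (s ≤ (a : ℕ) ∧ (a : ℕ) < n) := by
  rw [mkp_zero]
  constructor
  · rintro ⟨h1, k, hk, hlt⟩
    constructor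
    · rcases h1 with h | ⟨i, hi, _⟩
      · exact h
      · exact absurd hi (Fin.not_lt_zero i)
    · rcases Fin.eq_zero_or_eq_succ k with rfl | ⟨k', rfl⟩
      · exact absurd hk (lt_irrefl 0)
      · rw [mkp_succ] at hlt
        have h2 := (L4 a (τ k')).mp hlt
        have h3 := (τ k').isLt
        omega
  · rintro ⟨h1, h2⟩
    refine ⟨Or.inl h1, (τ.symm ⟨(a : ℕ), h2⟩).succ, Fin.succ_pos _, ?_⟩
    rw [mkp_succ, Equiv.apply_symm_apply]
    exact (L4 a _).mpr (by simp)

lemma cond0_132 (s : ℕ) (a : Fin (n + 1)) (τ : Equiv.Perm (Fin n)) :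
    (∃ k, (0 : Fin (n + 1)) < k ∧ mkp a τ k < mkp a τ 0 ∧
        (s ≤ ((mkp a τ) k : ℕ) ∨ ∃ i, i < (0 : Fin (n + 1)) ∧ mkp a τ i < mkp a τ k)) ↔
      s < (a : ℕ) := by
  rw [mkp_zero]
  constructor
  · rintro ⟨k, hk, hlt, h1⟩
    rcases Fin.eq_zero_or_eq_succ k with rfl | ⟨k', rfl⟩
    · exact absurd hk (lt_irrefl 0)
    · rw [mkp_succ] at hlt h1
      have h2 := (L5 a (τ k')).mp hlt
      rcases h1 with h | ⟨i, hi, _⟩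
      · rw [succAbove_val, if_pos h2] at h
        omega
      · exact absurd hi (Fin.not_lt_zero i)
  · intro h
    have hs : s < n := by have := a.isLt; omega
    refine ⟨(τ.symm ⟨s, hs⟩).succ, Fin.succ_pos _, ?_, ?_⟩
    · rw [mkp_succ, Equiv.apply_symm_apply]
      exact (L5 a _).mpr (by simpa using h)
    · left
      rw [mkp_succ, Equiv.apply_symm_apply, succAbove_val, if_pos (by simpa using h)]

lemma condsucc_123 (s : ℕ) (a : Fin (n + 1)) (τ : Equiv.Perm (Fin n)) (j : Fin n) :
    ((s ≤ ((mkp a τ) j.succ : ℕ) ∨ ∃ i, i < j.succ ∧ mkp a τ i < mkp a τ j.succ) ∧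
        ∃ k, j.succ < k ∧ mkp a τ j.succ < mkp a τ k) ↔
      ((min s (a : ℕ) ≤ ((τ j : Fin n) : ℕ) ∨ ∃ i, i < j ∧ τ i < τ j) ∧
        ∃ k, j < k ∧ τ j < τ k) := by
  apply and_congr
  · constructor
    · rintro (h | ⟨i, hi, hlt⟩)
      · rw [mkp_succ] at h
        exact Or.inl ((L1 s a (τ j)).mp (Or.inl h))
      · rcases Fin.eq_zero_or_eq_succ i with rfl | ⟨i', rfl⟩
        · rw [mkp_zero, mkp_succ] at hlt
          exact Or.inl ((L1 s a (τ j)).mp (Or.inr hlt))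
        · rw [mkp_succ, mkp_succ] at hlt
          exact Or.inr ⟨i', Fin.succ_lt_succ_iff.mp hi,
            Fin.succAbove_lt_succAbove_iff.mp hlt⟩
    · rintro (h | ⟨i, hi, hlt⟩)
      · rcases (L1 s a (τ j)).mpr h with h' | h'
        · exact Or.inl (by rw [mkp_succ]; exact h')
        · exact Or.inr ⟨0, Fin.succ_pos j, by rw [mkp_zero, mkp_succ]; exact h'⟩
      · exact Or.inr ⟨i.succ, Fin.succ_lt_succ_iff.mpr hi,
          by rw [mkp_succ, mkp_succ]; exact Fin.succAbove_lt_succAbove_iff.mpr hlt⟩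
  · constructor
    · rintro ⟨k, hk, hlt⟩
      rcases Fin.eq_zero_or_eq_succ k with rfl | ⟨k', rfl⟩
      · exact absurd hk (Fin.not_lt_zero _)
      · rw [mkp_succ, mkp_succ] at hlt
        exact ⟨k', Fin.succ_lt_succ_iff.mp hk, Fin.succAbove_lt_succAbove_iff.mp hlt⟩
    · rintro ⟨k, hk, hlt⟩
      exact ⟨k.succ, Fin.succ_lt_succ_iff.mpr hk,
        by rw [mkp_succ, mkp_succ]; exact Fin.succAbove_lt_succAbove_iff.mpr hlt⟩

lemma condsucc_132 (s : ℕ) (a : Fin (n + 1)) (τ : Equiv.Perm (Fin n)) (j : Fin n) :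
    (∃ k, j.succ < k ∧ mkp a τ k < mkp a τ j.succ ∧
        (s ≤ ((mkp a τ) k : ℕ) ∨ ∃ i, i < j.succ ∧ mkp a τ i < mkp a τ k)) ↔
      (∃ k, j < k ∧ τ k < τ j ∧
        (min s (a : ℕ) ≤ ((τ k : Fin n) : ℕ) ∨ ∃ i, i < j ∧ τ i < τ k)) := by
  constructor
  · rintro ⟨k, hk, hlt, h1⟩
    rcases Fin.eq_zero_or_eq_succ k with rfl | ⟨k', rfl⟩
    · exact absurd hk (Fin.not_lt_zero _)
    · rw [mkp_succ, mkp_succ] at hlt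
      refine ⟨k', Fin.succ_lt_succ_iff.mp hk, Fin.succAbove_lt_succAbove_iff.mp hlt, ?_⟩
      rcases h1 with h | ⟨i, hi, hlt'⟩
      · rw [mkp_succ] at h
        exact Or.inl ((L1 s a (τ k')).mp (Or.inl h))
      · rcases Fin.eq_zero_or_eq_succ i with rfl | ⟨i', rfl⟩
        · rw [mkp_zero, mkp_succ] at hlt'
          exact Or.inl ((L1 s a (τ k')).mp (Or.inr hlt'))
        · rw [mkp_succ, mkp_succ] at hlt'
          exact Or.inr ⟨i', Fin.succ_lt_succ_iff.mp hi,
            Fin.succAbove_lt_succAbove_iff.mp hlt'⟩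
  · rintro ⟨k, hk, hlt, h1⟩
    refine ⟨k.succ, Fin.succ_lt_succ_iff.mpr hk,
      by rw [mkp_succ, mkp_succ]; exact Fin.succAbove_lt_succAbove_iff.mpr hlt, ?_⟩
    rcases h1 with h | ⟨i, hi, hlt'⟩
    · rcases (L1 s a (τ k)).mpr h with h' | h'
      · exact Or.inl (by rw [mkp_succ]; exact h')
      · exact Or.inr ⟨0, Fin.succ_pos j, by rw [mkp_zero, mkp_succ]; exact h'⟩
    · exact Or.inr ⟨i.succ, Fin.succ_lt_succ_iff.mpr hi,
        by rw [mkp_succ, mkp_succ]; exact Fin.succAbove_lt_succAbove_iff.mpr hlt'⟩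

lemma PM123_mkp (s : ℕ) (a : Fin (n + 1)) (τ : Equiv.Perm (Fin n)) :
    PM123 s (mkp a τ) =
      (if s ≤ (a : ℕ) ∧ (a : ℕ) < n then 1 else 0) + PM123 (min s (a : ℕ)) τ := by
  unfold PM123
  rw [Finset.card_filter, Finset.card_filter, Fin.sum_univ_succ]
  congr 1
  · exact if_congr (cond0_123 s a τ) rfl rfl
  · exact Finset.sum_congr rfl fun j _ => if_congr (condsucc_123 s a τ j) rfl rfl

lemma PM132_mkp (s : ℕ) (a : Fin (n + 1)) (τ : Equiv.Perm (Fin n)) :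
    PM132 s (mkp a τ) =
      (if s < (a : ℕ) then 1 else 0) + PM132 (min s (a : ℕ)) τ := by
  unfold PM132
  rw [Finset.card_filter, Finset.card_filter, Fin.sum_univ_succ]
  congr 1
  · exact if_congr (cond0_132 s a τ) rfl rfl
  · exact Finset.sum_congr rfl fun j _ => if_congr (condsucc_132 s a τ j) rfl rfl

lemma sum_swap_aux (n s D : ℕ) (C : ℕ → ℕ) :
    ∑ x ∈ Finset.range (n + 1), (if s ≤ x ∧ x < n then D else C (min s x)) =
      ∑ x ∈ Finset.range (n + 1), (if s < x then D else C (min s x)) := by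
  induction n with
  | zero =>
    rw [Finset.sum_range_one, Finset.sum_range_one, if_neg (by omega), if_neg (by omega)]
  | succ n ih =>
    have hL : ∑ x ∈ Finset.range (n + 1), (if s ≤ x ∧ x < n + 1 then D else C (min s x)) =
        (∑ x ∈ Finset.range n, (if s ≤ x ∧ x < n then D else C (min s x))) +
          (if s ≤ n then D else C (min s n)) := by
      rw [Finset.sum_range_succ]
      congr 1
      · refine Finset.sum_congr rfl fun x hx => ?_
        have := Finset.mem_range.mp hx
        exact if_congr (by omega) rfl rfl
      · exact if_congr (by omega) rfl rfl
    have ih' : (∑ x ∈ Finset.range n, (if s ≤ x ∧ x < n then D else C (min s x))) +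
        C (min s n) = ∑ x ∈ Finset.range (n + 1), (if s < x then D else C (min s x)) := by
      rw [← ih, Finset.sum_range_succ]
      congr 1
      rw [if_neg (by omega)]
    conv_lhs => rw [Finset.sum_range_succ]
    conv_rhs => rw [Finset.sum_range_succ]
    rw [if_neg (show ¬(s ≤ n + 1 ∧ n + 1 < n + 1) by omega), hL, ← ih']
    by_cases h : s ≤ n
    · rw [if_pos h, if_pos (show s < n + 1 by omega),
        show min s (n + 1) = min s n by omega]
      ring
    · rw [if_neg h, if_neg (show ¬s < n + 1 by omega)]

lemma sum_swap_fin (n s D : ℕ) (C : ℕ → ℕ) :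
    ∑ a : Fin (n + 1), (if s ≤ (a : ℕ) ∧ (a : ℕ) < n then D else C (min s (a : ℕ))) =
      ∑ a : Fin (n + 1), (if s < (a : ℕ) then D else C (min s (a : ℕ))) :=
  calc ∑ a : Fin (n + 1), (if s ≤ (a : ℕ) ∧ (a : ℕ) < n then D else C (min s (a : ℕ)))
      = ∑ x ∈ Finset.range (n + 1), (if s ≤ x ∧ x < n then D else C (min s x)) :=
        Fin.sum_univ_eq_sum_range (fun x => if s ≤ x ∧ x < n then D else C (min s x)) (n + 1)
    _ = ∑ x ∈ Finset.range (n + 1), (if s < x then D else C (min s x)) := sum_swap_aux n s D C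
    _ = ∑ a : Fin (n + 1), (if s < (a : ℕ) then D else C (min s (a : ℕ))) :=
        (Fin.sum_univ_eq_sum_range (fun x => if s < x then D else C (min s x)) (n + 1)).symm

lemma main_equidistribution (n : ℕ) : ∀ s m : ℕ,
    Nat.card {σ : Equiv.Perm (Fin n) // PM123 s σ = m} =
      Nat.card {σ : Equiv.Perm (Fin n) // PM132 s σ = m} := by
  induction n with
  | zero =>
    intro s m
    have h1 : ∀ σ : Equiv.Perm (Fin 0), PM123 s σ = 0 := fun σ => by simp [PM123]
    have h2 : ∀ σ : Equiv.Perm (Fin 0), PM132 s σ = 0 := fun σ => by simp [PM132]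
    exact Nat.card_congr (Equiv.subtypeEquiv (Equiv.refl _) fun σ => by rw [h1, h2])
  | succ n ih =>
    intro s m
    rw [card_split (fun σ => PM123 s σ = m), card_split (fun σ => PM132 s σ = m)]
    have e123 : ∀ a : Fin (n + 1),
        Nat.card {τ : Equiv.Perm (Fin n) // PM123 s (mkp a τ) = m} =
          if s ≤ (a : ℕ) ∧ (a : ℕ) < n then
            (if m = 0 then 0 else Nat.card {τ : Equiv.Perm (Fin n) // PM132 s τ = m - 1})
          else Nat.card {τ : Equiv.Perm (Fin n) // PM132 (min s (a : ℕ)) τ = m} := by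
      intro a
      simp only [PM123_mkp]
      by_cases h : s ≤ (a : ℕ) ∧ (a : ℕ) < n
      · rw [if_pos h, if_pos h, min_eq_left h.1]
        cases m with
        | zero =>
          rw [if_pos rfl]
          have : IsEmpty {τ : Equiv.Perm (Fin n) // 1 + PM123 s τ = 0} :=
            ⟨fun ⟨τ, hτ⟩ => by omega⟩
          exact Nat.card_of_isEmpty
        | succ m' =>
          rw [if_neg (by omega), Nat.add_sub_cancel, ← ih s m']
          exact Nat.card_congr (Equiv.subtypeEquiv (Equiv.refl _) fun τ => by
            simp only [Equiv.refl_apply]; omega)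
      · rw [if_neg h, if_neg h, ← ih (min s (a : ℕ)) m]
        exact Nat.card_congr (Equiv.subtypeEquiv (Equiv.refl _) fun τ => by
          simp only [Equiv.refl_apply]; omega)
    have e132 : ∀ a : Fin (n + 1),
        Nat.card {τ : Equiv.Perm (Fin n) // PM132 s (mkp a τ) = m} =
          if s < (a : ℕ) then
            (if m = 0 then 0 else Nat.card {τ : Equiv.Perm (Fin n) // PM132 s τ = m - 1})
          else Nat.card {τ : Equiv.Perm (Fin n) // PM132 (min s (a : ℕ)) τ = m} := by
      intro a
      simp only [PM132_mkp]
      by_cases h : s < (a : ℕ)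
      · rw [if_pos h, if_pos h, min_eq_left (le_of_lt h)]
        cases m with
        | zero =>
          rw [if_pos rfl]
          have : IsEmpty {τ : Equiv.Perm (Fin n) // 1 + PM132 s τ = 0} :=
            ⟨fun ⟨τ, hτ⟩ => by omega⟩
          exact Nat.card_of_isEmpty
        | succ m' =>
          rw [if_neg (by omega), Nat.add_sub_cancel]
          exact Nat.card_congr (Equiv.subtypeEquiv (Equiv.refl _) fun τ => by
            simp only [Equiv.refl_apply]; omega)
      · rw [if_neg h, if_neg h]
        exact Nat.card_congr (Equiv.subtypeEquiv (Equiv.refl _) fun τ => by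
          simp only [Equiv.refl_apply]; omega)
    rw [Finset.sum_congr rfl fun a _ => e123 a, Finset.sum_congr rfl fun a _ => e132 a]
    exact sum_swap_fin n s
      (if m = 0 then 0 else Nat.card {τ : Equiv.Perm (Fin n) // PM132 s τ = m - 1})
      (fun t => Nat.card {τ : Equiv.Perm (Fin n) // PM132 t τ = m})

end Aux

/-- Number of positions `j` serving as the middle element of an occurrence of 123
(pmp of `1\underline{2}3`). -/
noncomputable def pmpM123 {n : ℕ} (σ : Equiv.Perm (Fin n)) : ℕ :=
  Nat.card {j : Fin n // ∃ i k : Fin n, i < j ∧ j < k ∧ σ i < σ j ∧ σ j < σ k}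

/-- Number of positions `j` serving as the largest element (middle position) of an
occurrence of 132 (pmp of `1\underline{3}2`). -/
noncomputable def pmpM132 {n : ℕ} (σ : Equiv.Perm (Fin n)) : ℕ :=
  Nat.card {j : Fin n // ∃ i k : Fin n, i < j ∧ j < k ∧ σ i < σ k ∧ σ k < σ j}

lemma pmpM123_eq_PM123 {n : ℕ} (σ : Equiv.Perm (Fin n)) : pmpM123 σ = PM123 n σ := by
  rw [pmpM123, PM123, Nat.card_eq_fintype_card, Fintype.card_subtype]
  congr 1
  apply Finset.filter_congr
  intro j _
  constructor
  · rintro ⟨i, k, hij, hjk, h1, h2⟩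
    exact ⟨Or.inr ⟨i, hij, h1⟩, k, hjk, h2⟩
  · rintro ⟨h1 | ⟨i, hij, h1⟩, k, hjk, h2⟩
    · exact absurd h1 (by have := (σ j).isLt; omega)
    · exact ⟨i, k, hij, hjk, h1, h2⟩

lemma pmpM132_eq_PM132 {n : ℕ} (σ : Equiv.Perm (Fin n)) : pmpM132 σ = PM132 n σ := by
  rw [pmpM132, PM132, Nat.card_eq_fintype_card, Fintype.card_subtype]
  congr 1
  apply Finset.filter_congr
  intro j _
  constructor
  · rintro ⟨i, k, hij, hjk, h1, h2⟩
    exact ⟨k, hjk, h2, Or.inr ⟨i, hij, h1⟩⟩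
  · rintro ⟨k, hjk, h2, h1 | ⟨i, hij, h1⟩⟩
    · exact absurd h1 (by have := (σ k).isLt; omega)
    · exact ⟨i, k, hij, hjk, h1, h2⟩

theorem stmt6 (n m : ℕ) :
    Nat.card {σ : Equiv.Perm (Fin n) // pmpM123 σ = m} =
      Nat.card {σ : Equiv.Perm (Fin n) // pmpM132 σ = m} := by
  calc Nat.card {σ : Equiv.Perm (Fin n) // pmpM123 σ = m}
      = Nat.card {σ : Equiv.Perm (Fin n) // PM123 n σ = m} :=
        Nat.card_congr (Equiv.subtypeEquiv (Equiv.refl _) fun σ => by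
          rw [Equiv.refl_apply, pmpM123_eq_PM123])
    _ = Nat.card {σ : Equiv.Perm (Fin n) // PM132 n σ = m} := main_equidistribution n n m
    _ = Nat.card {σ : Equiv.Perm (Fin n) // pmpM132 σ = m} :=
        Nat.card_congr (Equiv.subtypeEquiv (Equiv.refl _) fun σ => by
          rw [Equiv.refl_apply, pmpM132_eq_PM132])
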